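/- Let A, B ∈ ℝ^{n×n} with B invertible and AB = BA, and let P ∈ ℝ^{n×n} be symmetric positive definite such that (A − 2BAB⁻¹)ᵀP + P(A − 2BAB⁻¹) is negative definite. Then there exist a symmetric positive definite matrix T ∈ ℝ^{n×n} and a scalar β > 0 such that the 2n×2n symmetric block matrix [[AᵀP + PA + T − (4/β)AᵀB⁻ᵀB⁻¹A, PB − (2/β)AᵀB⁻ᵀ], [BᵀP − (2/β)B⁻¹A, −(1/β)I]] is negative semidefinite. -/

import Mathlib

open Matrix

private lemma dotTmulVec {n : ℕ} (M : Matrix (Fin n) (Fin n) ℝ) (x y : Fin n → ℝ) :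
    x ⬝ᵥ (Mᵀ *ᵥ y) = (M *ᵥ x) ⬝ᵥ y := by
  rw [Matrix.dotProduct_mulVec, Matrix.vecMul_transpose]

private lemma dot_self_nonneg {n : ℕ} (x : Fin n → ℝ) : 0 ≤ x ⬝ᵥ x :=
  Finset.sum_nonneg fun i _ => mul_self_nonneg _

/-- Coercivity of a positive-definite quadratic form. -/
private lemma coercive {n : ℕ} (S : Matrix (Fin n) (Fin n) ℝ)
    (h : ∀ x : Fin n → ℝ, x ≠ 0 → 0 < x ⬝ᵥ (S *ᵥ x)) :
    ∃ c : ℝ, 0 < c ∧ ∀ x : Fin n → ℝ, c * (x ⬝ᵥ x) ≤ x ⬝ᵥ (S *ᵥ x) := by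
  rcases Nat.eq_zero_or_pos n with hn | hn
  · subst hn
    refine ⟨1, one_pos, fun x => ?_⟩
    have hx : x = 0 := funext fun i => absurd i.2 (by omega)
    simp [hx]
  · set f : (Fin n → ℝ) → ℝ := fun x => x ⬝ᵥ (S *ᵥ x) with hf
    have hcont : Continuous f := by
      simp only [hf, dotProduct, mulVec, dotProduct]
      exact continuous_finset_sum _ fun i _ =>
        (continuous_apply i).mul
          (continuous_finset_sum _ fun j _ => (continuous_const.mul (continuous_apply j)))
    set K : Set (Fin n → ℝ) := {x | x ⬝ᵥ x = 1} with hK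
    have hKcl : IsClosed K := by
      have : Continuous fun x : Fin n → ℝ => x ⬝ᵥ x := by
        simp only [dotProduct]
        exact continuous_finset_sum _ fun i _ => (continuous_apply i).mul (continuous_apply i)
      exact isClosed_eq this continuous_const
    have hKbd : Bornology.IsBounded K := by
      refine (Metric.isBounded_iff_subset_closedBall 0).2 ⟨1, fun x hx => ?_⟩
      have hx1 : x ⬝ᵥ x = 1 := hx
      simp only [Metric.mem_closedBall, dist_zero_right]
      refine (pi_norm_le_iff_of_nonneg zero_le_one).2 fun i => ?_
      have h1 : x i * x i ≤ 1 := by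
        rw [← hx1]
        exact Finset.single_le_sum (fun j _ => mul_self_nonneg (x j)) (Finset.mem_univ i)
      rw [Real.norm_eq_abs]
      nlinarith [abs_nonneg (x i), sq_abs (x i)]
    have hKc : IsCompact K := Metric.isCompact_of_isClosed_isBounded hKcl hKbd
    have hKne : K.Nonempty := by
      refine ⟨Pi.single ⟨0, hn⟩ 1, ?_⟩
      have : (Pi.single (⟨0, hn⟩ : Fin n) (1:ℝ)) ⬝ᵥ (Pi.single ⟨0, hn⟩ 1) = 1 := by
        simp [dotProduct, Pi.single_apply]
      exact this
    obtain ⟨u, huK, hmin⟩ := hKc.exists_isMinOn hKne hcont.continuousOn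
    have hu1 : u ⬝ᵥ u = 1 := huK
    have hune : u ≠ 0 := by
      intro h0
      rw [h0] at hu1
      simp at hu1
    have hc : 0 < f u := h u hune
    refine ⟨f u, hc, fun x => ?_⟩
    by_cases hx : x = 0
    · simp [hx, hf]
    · have hp : 0 < x ⬝ᵥ x :=
        lt_of_le_of_ne (dot_self_nonneg x) (fun h0 => hx (dotProduct_self_eq_zero.1 h0.symm))
      set r : ℝ := Real.sqrt (x ⬝ᵥ x) with hr
      have hrpos : 0 < r := Real.sqrt_pos.2 hp
      have hr2 : r * r = x ⬝ᵥ x := Real.mul_self_sqrt (dot_self_nonneg x)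
      set y : Fin n → ℝ := r⁻¹ • x with hy
      have hyK : y ∈ K := by
        show y ⬝ᵥ y = 1
        rw [hy, smul_dotProduct, dotProduct_smul, smul_eq_mul, smul_eq_mul, ← hr2]
        field_simp
      have hle : f u ≤ f y := hmin hyK
      have hfy : f y = r⁻¹ * (r⁻¹ * (x ⬝ᵥ (S *ᵥ x))) := by
        simp only [hf, hy, smul_dotProduct, mulVec_smul, dotProduct_smul, smul_eq_mul]
      rw [hfy] at hle
      have h2 : f u * (r * r) ≤ x ⬝ᵥ (S *ᵥ x) := by
        have hrne : r ≠ 0 := ne_of_gt hrpos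
        have := mul_le_mul_of_nonneg_left hle (le_of_lt (mul_pos hrpos hrpos))
        calc f u * (r * r) = r * r * f u := by ring
        _ ≤ r * r * (r⁻¹ * (r⁻¹ * (x ⬝ᵥ (S *ᵥ x)))) := this
        _ = x ⬝ᵥ (S *ᵥ x) := by field_simp
      rwa [← hr2]

/-- Cauchy–Schwarz-type bound for a bilinear form given by a matrix. -/
private lemma dot_mulVec_sq_le {n : ℕ} (K : Matrix (Fin n) (Fin n) ℝ) (x w : Fin n → ℝ) :
    (x ⬝ᵥ (K *ᵥ w))^2 ≤ (∑ i, ∑ j, (K i j)^2) * ((x ⬝ᵥ x) * (w ⬝ᵥ w)) := by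
  have h1 : (x ⬝ᵥ (K *ᵥ w))^2 ≤ (x ⬝ᵥ x) * ((K *ᵥ w) ⬝ᵥ (K *ᵥ w)) := by
    have := Finset.sum_mul_sq_le_sq_mul_sq Finset.univ x (K *ᵥ w)
    simpa [dotProduct, pow_two] using this
  have h2 : (K *ᵥ w) ⬝ᵥ (K *ᵥ w) ≤ (∑ i, ∑ j, (K i j)^2) * (w ⬝ᵥ w) := by
    have hrow : ∀ i : Fin n, ((K *ᵥ w) i)^2 ≤ (∑ j, (K i j)^2) * (w ⬝ᵥ w) := by
      intro i
      have := Finset.sum_mul_sq_le_sq_mul_sq Finset.univ (fun j => K i j) w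
      simpa [mulVec, dotProduct, pow_two] using this
    calc (K *ᵥ w) ⬝ᵥ (K *ᵥ w) = ∑ i, ((K *ᵥ w) i)^2 := by
          simp [dotProduct, pow_two]
      _ ≤ ∑ i, (∑ j, (K i j)^2) * (w ⬝ᵥ w) := Finset.sum_le_sum fun i _ => hrow i
      _ = (∑ i, ∑ j, (K i j)^2) * (w ⬝ᵥ w) := by rw [Finset.sum_mul]
  calc (x ⬝ᵥ (K *ᵥ w))^2 ≤ (x ⬝ᵥ x) * ((K *ᵥ w) ⬝ᵥ (K *ᵥ w)) := h1
    _ ≤ (x ⬝ᵥ x) * ((∑ i, ∑ j, (K i j)^2) * (w ⬝ᵥ w)) := by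
        exact mul_le_mul_of_nonneg_left h2 (dot_self_nonneg x)
    _ = (∑ i, ∑ j, (K i j)^2) * ((x ⬝ᵥ x) * (w ⬝ᵥ w)) := by ring

set_option maxHeartbeats 1000000 in
private lemma arith_final (c F2 q s t p r : ℝ) (hc : 0 < c) (hF2 : 0 ≤ F2)
    (hq : q * c = 2 * F2 + c) (hsge : c * p ≤ s) (hpge : 0 ≤ p) (hrge : 0 ≤ r)
    (ht2 : t^2 ≤ F2 * (p * r)) : -(1/2) * s + 2 * t - q * r ≤ 0 := by
  have habs : 4*c*t ≤ c^2*p + (4*F2 + 2*c)*r := by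
    have hM : 0 ≤ c^2*p + (4*F2 + 2*c)*r :=
      add_nonneg (mul_nonneg (sq_nonneg c) hpge)
        (mul_nonneg (by linarith) hrge)
    have hsq : (4*c*t)^2 ≤ (c^2*p + (4*F2 + 2*c)*r)^2 := by
      nlinarith [mul_le_mul_of_nonneg_left ht2 (by positivity : (0:ℝ) ≤ 16*c^2),
        sq_nonneg (c^2*p - (4*F2 + 2*c)*r),
        mul_nonneg (mul_nonneg (pow_nonneg hc.le 3) hpge) hrge]
    nlinarith [hsq, hM]
  have hqr : q * c * r = (2 * F2 + c) * r := by rw [hq]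
  have final : 2*c*(-(1/2)*s + 2*t - q*r) ≤ 0 := by
    nlinarith [habs, mul_le_mul_of_nonneg_left hsge hc.le, hrge, hqr]
  by_contra hG
  push_neg at hG
  nlinarith [final, mul_pos (by linarith : (0:ℝ) < 2*c) hG]

/-- For `A`, `B` with `B` invertible and `AB = BA`, if `P` is
symmetric positive definite with `(A − 2BAB⁻¹)ᵀP + P(A − 2BAB⁻¹)` negative
definite (asymptotic stability under the output feedback `u = −2Ay` with
Lyapunov function `V = xᵀPx`), then there exist a symmetric positive definite
`T` and `β > 0` such that the block matrix
`[[AᵀP + PA + T − (4/β)AᵀB⁻ᵀB⁻¹A, PB − (2/β)AᵀB⁻ᵀ], [BᵀP − (2/β)B⁻¹A, −(1/β)I]]`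
is negative semidefinite (strict (Q,S,R)-dissipativity with
`Q = (4/β)I, S = −(2/β)I, R = (1/β)I`). -/
theorem strictlyDissipative_of_asympStable {n : ℕ}
    (A B P : Matrix (Fin n) (Fin n) ℝ)
    (hB : IsUnit B.det)
    (hAB : A * B = B * A)
    (hP : P.PosDef)
    (hstab : ∀ z : Fin n → ℝ, z ≠ 0 →
      z ⬝ᵥ (((A - 2 • (B * A * B⁻¹))ᵀ * P + P * (A - 2 • (B * A * B⁻¹))) *ᵥ z) < 0) :
    ∃ (T : Matrix (Fin n) (Fin n) ℝ) (β : ℝ), T.PosDef ∧ 0 < β ∧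
      ∀ z : Fin n ⊕ Fin n → ℝ,
        z ⬝ᵥ ((Matrix.fromBlocks
            (Aᵀ * P + P * A + T - (4 / β) • (Aᵀ * B⁻¹ᵀ * B⁻¹ * A))
            (P * B - (2 / β) • (Aᵀ * B⁻¹ᵀ))
            (Bᵀ * P - (2 / β) • (B⁻¹ * A))
            (-((1 / β) • (1 : Matrix (Fin n) (Fin n) ℝ)))) *ᵥ z) ≤ 0 := by
  have hBB : B * B⁻¹ = 1 := mul_nonsing_inv B hB
  have hBAB : B * A * B⁻¹ = A := by
    rw [← hAB, mul_assoc, hBB, mul_one]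
  have hPt : Pᵀ = P := by
    have := hP.1
    rwa [Matrix.IsHermitian, conjTranspose_eq_transpose_of_trivial] at this
  set S : Matrix (Fin n) (Fin n) ℝ := Aᵀ * P + P * A with hSdef
  -- positivity of S
  have hSpos : ∀ x : Fin n → ℝ, x ≠ 0 → 0 < x ⬝ᵥ (S *ᵥ x) := by
    intro x hx
    have h0 := hstab x hx
    rw [hBAB] at h0
    have h2 : A - 2 • A = -A := by
      rw [two_smul]; abel
    rw [h2] at h0
    have hneg : (-A)ᵀ * P + P * (-A) = -S := by
      rw [hSdef, transpose_neg, neg_mul, mul_neg, neg_add]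
    rw [hneg, neg_mulVec, dotProduct_neg] at h0
    linarith
  obtain ⟨c, hc, hcoer⟩ := coercive S hSpos
  set Km : Matrix (Fin n) (Fin n) ℝ := P * B with hKm
  set F2 : ℝ := ∑ i, ∑ j, (Km i j)^2 with hF2def
  have hF2 : 0 ≤ F2 :=
    Finset.sum_nonneg fun i _ => Finset.sum_nonneg fun j _ => sq_nonneg _
  set β : ℝ := c / (2 * F2 + c) with hβdef
  have hden : 0 < 2 * F2 + c := by linarith
  have hβ : 0 < β := div_pos hc hden
  have hβc : (1 / β) * c = 2 * F2 + c := by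
    rw [hβdef]
    field_simp
  -- the strictness matrix
  refine ⟨(1/2 : ℝ) • S, β, ?_, hβ, ?_⟩
  · refine posDef_iff_dotProduct_mulVec.mpr ⟨?_, ?_⟩
    · show ((1/2 : ℝ) • S)ᴴ = (1/2 : ℝ) • S
      rw [conjTranspose_eq_transpose_of_trivial, transpose_smul, hSdef, transpose_add,
        transpose_mul, transpose_mul, transpose_transpose, hPt, add_comm]
    · intro x hx
      have := hSpos x hx
      have hs : star x = x := by simp
      rw [hs, smul_mulVec, dotProduct_smul, smul_eq_mul]
      linarith
  · intro z
    set x : Fin n → ℝ := z ∘ Sum.inl with hx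
    set w : Fin n → ℝ := z ∘ Sum.inr with hw
    set C : Matrix (Fin n) (Fin n) ℝ := B⁻¹ * A with hC
    set u : Fin n → ℝ := C *ᵥ x with hu
    set v : Fin n → ℝ := w + (2:ℝ) • u with hv
    set s : ℝ := x ⬝ᵥ (S *ᵥ x) with hs
    set t : ℝ := x ⬝ᵥ (Km *ᵥ v) with ht
    set p : ℝ := x ⬝ᵥ x with hp
    set r : ℝ := v ⬝ᵥ v with hr
    -- basic transposition facts
    have hCt : Aᵀ * B⁻¹ᵀ = Cᵀ := by rw [hC, transpose_mul]
    have hKt : Bᵀ * P = Kmᵀ := by rw [hKm, transpose_mul, hPt]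
    have hPAx : x ⬝ᵥ ((P * A) *ᵥ x) = (1/2) * s := by
      have h1 : x ⬝ᵥ ((Aᵀ * P) *ᵥ x) = x ⬝ᵥ ((P * A) *ᵥ x) := by
        have ha : x ⬝ᵥ ((P * A) *ᵥ x) = (P *ᵥ x) ⬝ᵥ (A *ᵥ x) := by
          rw [← mulVec_mulVec]
          conv_lhs => rw [show P = Pᵀ from hPt.symm]
          rw [dotTmulVec]
        rw [← mulVec_mulVec, dotTmulVec, ha, dotProduct_comm]
      have h2 : s = x ⬝ᵥ ((Aᵀ * P) *ᵥ x) + x ⬝ᵥ ((P * A) *ᵥ x) := by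
        rw [hs, hSdef, add_mulVec, dotProduct_add]
      rw [h1] at h2
      linarith
    have hKu : Km *ᵥ u = (P * A) *ᵥ x := by
      rw [hu, mulVec_mulVec, hKm, hC, mul_assoc, ← mul_assoc B, hBB, one_mul]
    -- the key identity
    have key : z ⬝ᵥ ((Matrix.fromBlocks
            (Aᵀ * P + P * A + (1/2 : ℝ) • S - (4 / β) • (Aᵀ * B⁻¹ᵀ * B⁻¹ * A))
            (P * B - (2 / β) • (Aᵀ * B⁻¹ᵀ))
            (Bᵀ * P - (2 / β) • (B⁻¹ * A))
            (-((1 / β) • (1 : Matrix (Fin n) (Fin n) ℝ)))) *ᵥ z)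
        = -(1/2) * s + 2 * t - (1/β) * r := by
      have hz : z = Sum.elim x w := by
        rw [hx, hw]; exact (Sum.elim_comp_inl_inr z).symm
      rw [hz, fromBlocks_mulVec, sumElim_dotProduct_sumElim]
      simp only [Sum.elim_comp_inl, Sum.elim_comp_inr]
      have hCC : Aᵀ * B⁻¹ᵀ * B⁻¹ * A = Cᵀ * C := by
        rw [hCt, hC, mul_assoc]
      have e1 : x ⬝ᵥ ((Aᵀ * P + P * A + (1/2 : ℝ) • S
            - (4 / β) • (Aᵀ * B⁻¹ᵀ * B⁻¹ * A)) *ᵥ x)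
          = s + (1/2) * s - (4/β) * (u ⬝ᵥ u) := by
        rw [hCC, sub_mulVec, add_mulVec, dotProduct_sub, dotProduct_add,
          smul_mulVec, dotProduct_smul, smul_mulVec, dotProduct_smul,
          ← mulVec_mulVec, dotTmulVec, ← hu, ← hSdef, ← hs, smul_eq_mul, smul_eq_mul]
      have e2 : x ⬝ᵥ ((P * B - (2 / β) • (Aᵀ * B⁻¹ᵀ)) *ᵥ w)
          = x ⬝ᵥ (Km *ᵥ w) - (2/β) * (u ⬝ᵥ w) := by
        rw [hCt, sub_mulVec, dotProduct_sub, smul_mulVec, dotProduct_smul,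
          dotTmulVec, ← hu, ← hKm, smul_eq_mul]
      have e3 : w ⬝ᵥ ((Bᵀ * P - (2 / β) • (B⁻¹ * A)) *ᵥ x)
          = x ⬝ᵥ (Km *ᵥ w) - (2/β) * (u ⬝ᵥ w) := by
        rw [hKt, sub_mulVec, dotProduct_sub, smul_mulVec, dotProduct_smul,
          dotTmulVec, ← hC, ← hu, smul_eq_mul, dotProduct_comm (Km *ᵥ w) x,
          dotProduct_comm w u]
      have e4 : w ⬝ᵥ ((-((1 / β) • (1 : Matrix (Fin n) (Fin n) ℝ))) *ᵥ w)
          = -((1/β) * (w ⬝ᵥ w)) := by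
        rw [neg_mulVec, dotProduct_neg, smul_mulVec, dotProduct_smul,
          one_mulVec, smul_eq_mul]
      rw [dotProduct_add, dotProduct_add, e1, e2, e3, e4]
      -- expand t and r in terms of w, u
      have htv : t = x ⬝ᵥ (Km *ᵥ w) + 2 * ((1/2) * s) := by
        rw [ht, hv, mulVec_add, dotProduct_add, mulVec_smul, dotProduct_smul,
          hKu, hPAx, smul_eq_mul]
      have hrv : r = w ⬝ᵥ w + 4 * (u ⬝ᵥ w) + 4 * (u ⬝ᵥ u) := by
        rw [hr, hv, dotProduct_add, add_dotProduct, add_dotProduct, dotProduct_smul,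
          smul_dotProduct, smul_dotProduct, dotProduct_smul, smul_eq_mul, smul_eq_mul,
          smul_eq_mul, dotProduct_comm w u]
        simp only [smul_eq_mul]
        ring
      rw [htv, hrv]
      ring
    rw [key]
    -- the quantitative bounds
    have hsge : c * p ≤ s := hcoer x
    have hpge : 0 ≤ p := dot_self_nonneg x
    have hrge : 0 ≤ r := dot_self_nonneg v
    have ht2 : t^2 ≤ F2 * (p * r) := dot_mulVec_sq_le Km x v
    exact arith_final c F2 (1/β) s t p r hc hF2 hβc hsge hpge hrge ht2
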